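/- Let d be a positive natural number, m ≥ d an integer with m ≡ d (mod 2), and h₁, h₂ > 0 reals. Let F: (0,∞) → ℂ be continuous. For 0 ≤ k ≤ d define f_k(a₁, a₂) = (√h₁ a₁)^{2k+1} (√h₂ a₂)^{2d+1-2k} (h₁a₁² - h₂a₂²)^{(m-d)/2} · ∫₀¹ F(2π h₁ a₁² t + 2π h₂ a₂² (1-t)) · t^{(m-d-1)/2+k} (1-t)^{(m+d-1)/2-k} dt on the region h₁a₁² > h₂a₂². If F is continuously differentiable, then for 0 ≤ k ≤ d-1, with ∂₁ = a₁ ∂/∂a₁ and Δ = h₁a₁² - h₂a₂², one has ∂₁ f_k = -(2k+1) (h₂a₂²/Δ) f_k + (m + d - 1 - 2k) (h₂a₂²/Δ) f_{k+1}. -/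

import Mathlib

open MeasureTheory intervalIntegral Set Real Filter Metric

lemma auxCont {p : ℝ} (hp : 0 < p) : Continuous fun t : ℝ => t ^ p := by
  rw [continuous_iff_continuousAt]
  exact fun x => Real.continuousAt_rpow_const x p (Or.inr hp.le)

lemma auxContOn {p : ℝ} (s : Set ℝ) (h : ∀ t ∈ s, t ≠ 0 ∨ 0 ≤ p) :
    ContinuousOn (fun t : ℝ => t ^ p) s := fun t ht =>
  (Real.continuousAt_rpow_const t p (h t ht)).continuousWithinAt

lemma auxIntegrable {p q : ℝ} (hp : -1 < p) (hq : -1 < q) :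
    IntervalIntegrable (fun t : ℝ => t ^ p * (1 - t) ^ q) volume 0 1 := by
  have h1 : IntervalIntegrable (fun t : ℝ => t ^ p * (1 - t) ^ q) volume 0 (1/2) := by
    apply (intervalIntegral.intervalIntegrable_rpow' hp).mul_continuousOn
    apply ContinuousOn.rpow_const
    · exact (continuous_const.sub continuous_id).continuousOn
    · intro t ht
      rw [Set.uIcc_of_le (by norm_num : (0:ℝ) ≤ 1/2)] at ht
      left; nlinarith [ht.2]
  have h2 : IntervalIntegrable (fun t : ℝ => t ^ p * (1 - t) ^ q) volume (1/2) 1 := by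
    have base : IntervalIntegrable (fun t : ℝ => (1 - t) ^ q) volume (1/2) 1 := by
      have := (intervalIntegral.intervalIntegrable_rpow' (a := 0) (b := 1/2) hq).comp_sub_left 1
      norm_num at this
      exact this.symm
    apply base.continuousOn_mul
    apply auxContOn
    intro t ht
    rw [Set.uIcc_of_le (by norm_num : (1:ℝ)/2 ≤ 1)] at ht
    left; nlinarith [ht.1]
  exact h1.trans h2

lemma auxOfReal {g : ℝ → ℝ} {a b : ℝ} (h : IntervalIntegrable g volume a b) :
    IntervalIntegrable (fun t => ((g t : ℝ) : ℂ)) volume a b := by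
  rw [intervalIntegrable_iff] at h ⊢
  exact h.ofReal

lemma auxIntMul {G : ℝ → ℂ} (hG : ContinuousOn G (Set.Icc 0 1)) {p q : ℝ}
    (hp : -1 < p) (hq : -1 < q) :
    IntervalIntegrable (fun t => G t * ((t ^ p * (1 - t) ^ q : ℝ) : ℂ)) volume 0 1 := by
  apply (auxOfReal (auxIntegrable hp hq)).continuousOn_mul
  rwa [Set.uIcc_of_le (by norm_num : (0:ℝ) ≤ 1)]

set_option maxHeartbeats 1000000 in
theorem stmt7 (d : ℕ) (hd : 1 ≤ d) (m : ℤ) (hmd : (d : ℤ) ≤ m) (hpar : m % 2 = (d : ℤ) % 2)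
    (h1 h2 : ℝ) (hh1 : 0 < h1) (hh2 : 0 < h2)
    (F : ℝ → ℂ) (hFc : ContinuousOn F (Set.Ioi 0)) (hF : ContDiffOn ℝ 1 F (Set.Ioi 0))
    (f : ℕ → ℝ → ℝ → ℂ)
    (hf : ∀ (k : ℕ) (a1 a2 : ℝ), k ≤ d → f k a1 a2 =
      (((Real.sqrt h1 * a1) ^ (2 * k + 1) * (Real.sqrt h2 * a2) ^ (2 * d + 1 - 2 * k) *
        (h1 * a1 ^ 2 - h2 * a2 ^ 2) ^ (((m : ℝ) - (d : ℝ)) / 2) : ℝ) : ℂ) *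
      ∫ t in (0:ℝ)..1,
        F (2 * Real.pi * h1 * a1 ^ 2 * t + 2 * Real.pi * h2 * a2 ^ 2 * (1 - t)) *
        ((t ^ (((m : ℝ) - (d : ℝ) - 1) / 2 + (k : ℝ)) *
          (1 - t) ^ (((m : ℝ) + (d : ℝ) - 1) / 2 - (k : ℝ)) : ℝ) : ℂ)) :
    ∀ k < d, ∀ a1 a2 : ℝ, 0 < a1 → 0 < a2 → h2 * a2 ^ 2 < h1 * a1 ^ 2 →
      (a1 : ℂ) * deriv (fun x : ℝ => f k x a2) a1 =
        -(2 * (k : ℂ) + 1) * (((h2 * a2 ^ 2) / (h1 * a1 ^ 2 - h2 * a2 ^ 2) : ℝ) : ℂ) *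
            f k a1 a2 +
        ((m : ℂ) + (d : ℂ) - 1 - 2 * (k : ℂ)) *
            (((h2 * a2 ^ 2) / (h1 * a1 ^ 2 - h2 * a2 ^ 2) : ℝ) : ℂ) * f (k + 1) a1 a2 := by
  intro k hk a1 a2 ha1 ha2 hlt
  have hπ := Real.pi_pos
  set α : ℝ := ((m : ℝ) - (d : ℝ) - 1) / 2 + (k : ℝ) with hαdef
  set β : ℝ := ((m : ℝ) + (d : ℝ) - 1) / 2 - (k : ℝ) with hβdef
  have hmR : (d : ℝ) ≤ (m : ℝ) := by exact_mod_cast hmd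
  have hkR : (k : ℝ) + 1 ≤ (d : ℝ) := by exact_mod_cast hk
  have hk0 : (0:ℝ) ≤ (k : ℝ) := Nat.cast_nonneg k
  have hα0 : -1 < α := by rw [hαdef]; linarith
  have hα1 : 0 < α + 1 := by linarith
  have hβpos : 0 < β := by rw [hβdef]; linarith
  have hβ1 : -1 < β - 1 := by linarith
  set Δ : ℝ := h1 * a1 ^ 2 - h2 * a2 ^ 2 with hΔdef
  have hΔ : 0 < Δ := by rw [hΔdef]; linarith
  set e : ℝ := ((m : ℝ) - (d : ℝ)) / 2 with hedef
  set u : ℝ → ℝ → ℝ := fun x t =>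
    2 * Real.pi * h1 * x ^ 2 * t + 2 * Real.pi * h2 * a2 ^ 2 * (1 - t) with hudef
  set w : ℝ → ℝ → ℝ → ℝ := fun p q t => t ^ p * (1 - t) ^ q with hwdef
  set P : ℝ → ℝ := fun x => (Real.sqrt h1 * x) ^ (2 * k + 1) *
    (Real.sqrt h2 * a2) ^ (2 * d + 1 - 2 * k) * (h1 * x ^ 2 - h2 * a2 ^ 2) ^ e with hPdef
  set J : ℝ → ℂ := fun x => ∫ t in (0:ℝ)..1, F (u x t) * ((w α β t : ℝ) : ℂ) with hJdef
  set J1 : ℂ := ∫ t in (0:ℝ)..1, F (u a1 t) * ((w (α+1) (β-1) t : ℝ) : ℂ) with hJ1def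
  -- the values of f
  have hfk : ∀ x : ℝ, f k x a2 = ((P x : ℝ) : ℂ) * J x := by
    intro x
    rw [hf k x a2 hk.le]
  -- positivity of u on balls
  have hball : ∀ x ∈ ball a1 (a1/2), a1/2 < x ∧ x < 3*a1/2 := by
    intro x hx
    rw [mem_ball, Real.dist_eq, abs_lt] at hx
    constructor <;> linarith [hx.1, hx.2]
  have huIcc : ∀ x ∈ ball a1 (a1/2), ∀ t ∈ Set.Icc (0:ℝ) 1,
      min (2*Real.pi*h2*a2^2) (Real.pi*h1*a1^2/2) ≤ u x t ∧
      u x t ≤ 2*Real.pi*h2*a2^2 + 5*Real.pi*h1*a1^2 := by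
    intro x hx t ht
    obtain ⟨hx1, hx2⟩ := hball x hx
    have hxpos : 0 < x := by linarith
    have hx2sq : x^2 < 9*a1^2/4 := by nlinarith
    have hx1sq : a1^2/4 < x^2 := by nlinarith
    obtain ⟨ht0, ht1⟩ := ht
    have hA : Real.pi*h1*a1^2/2 ≤ 2*Real.pi*h1*x^2 := by
      nlinarith [mul_le_mul_of_nonneg_left hx1sq.le (by positivity : (0:ℝ) ≤ 2*Real.pi*h1)]
    constructor
    · have l1 : min (2*Real.pi*h2*a2^2) (Real.pi*h1*a1^2/2) * t ≤ 2*Real.pi*h1*x^2 * t :=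
        mul_le_mul_of_nonneg_right (le_trans (min_le_right _ _) hA) ht0
      have l2 : min (2*Real.pi*h2*a2^2) (Real.pi*h1*a1^2/2) * (1-t) ≤ 2*Real.pi*h2*a2^2*(1-t) :=
        mul_le_mul_of_nonneg_right (min_le_left _ _) (by linarith)
      have l3 : min (2*Real.pi*h2*a2^2) (Real.pi*h1*a1^2/2) =
          min (2*Real.pi*h2*a2^2) (Real.pi*h1*a1^2/2) * t +
          min (2*Real.pi*h2*a2^2) (Real.pi*h1*a1^2/2) * (1-t) := by ring
      simp only [hudef]
      linarith
    · have hb1 : 2*Real.pi*h1*x^2*t ≤ 2*Real.pi*h1*x^2 :=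
        mul_le_of_le_one_right (by positivity) ht1
      have hb2 : 2*Real.pi*h1*x^2 ≤ 5*Real.pi*h1*a1^2 := by
        nlinarith [mul_le_mul_of_nonneg_left hx2sq.le (by positivity : (0:ℝ) ≤ 2*Real.pi*h1)]
      have hb3 : 2*Real.pi*h2*a2^2*(1-t) ≤ 2*Real.pi*h2*a2^2*1 :=
        mul_le_mul_of_nonneg_left (by linarith) (by positivity)
      simp only [hudef]
      linarith
  have hκpos : 0 < min (2*Real.pi*h2*a2^2) (Real.pi*h1*a1^2/2) := by positivity
  have hupos : ∀ x ∈ ball a1 (a1/2), ∀ t ∈ Set.Icc (0:ℝ) 1, 0 < u x t := by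
    intro x hx t ht
    exact lt_of_lt_of_le hκpos (huIcc x hx t ht).1
  have ha1ball : a1 ∈ ball a1 (a1/2) := mem_ball_self (by linarith)
  -- continuity facts
  have hucont : ∀ x : ℝ, Continuous (fun t => u x t) := by
    intro x
    simp only [hudef]
    exact (continuous_const.mul continuous_id).add
      (continuous_const.mul (continuous_const.sub continuous_id))
  have hgc : ContinuousOn (fun t => F (u a1 t)) (Set.Icc 0 1) := by
    apply hFc.comp (hucont a1).continuousOn
    intro t ht
    exact hupos a1 ha1ball t ht
  have hF'c : ContinuousOn (deriv F) (Set.Ioi 0) :=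
    hF.continuousOn_deriv_of_isOpen isOpen_Ioi le_rfl
  have hFd : ∀ y : ℝ, 0 < y → HasDerivAt F (deriv F y) y := by
    intro y hy
    exact ((hF.differentiableOn one_ne_zero y hy).differentiableAt
      (Ioi_mem_nhds hy)).hasDerivAt
  -- bound for deriv F on a compact interval
  obtain ⟨M, hM⟩ := (isCompact_Icc (a := min (2*Real.pi*h2*a2^2) (Real.pi*h1*a1^2/2))
      (b := 2*Real.pi*h2*a2^2 + 5*Real.pi*h1*a1^2)).exists_bound_of_continuousOn
      (hF'c.mono (fun y hy => lt_of_lt_of_le hκpos hy.1))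
  have hM0 : 0 ≤ M :=
    le_trans (norm_nonneg _) (hM (u a1 0) (Set.mem_Icc.mpr (huIcc a1 ha1ball 0 ⟨le_rfl, zero_le_one⟩)))
  have hIoc : Set.uIoc (0:ℝ) 1 = Set.Ioc 0 1 := Set.uIoc_of_le zero_le_one
  have hwcont : ContinuousOn (fun t => ((w α β t : ℝ):ℂ)) (Set.Ioc 0 1) := by
    apply Complex.continuous_ofReal.comp_continuousOn
    apply ContinuousOn.mul
    · exact auxContOn _ (fun t ht => Or.inl (ne_of_gt ht.1))
    · exact ContinuousOn.rpow_const (continuous_const.sub continuous_id).continuousOn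
        (fun t ht => Or.inr hβpos.le)
  have hJderiv : HasDerivAt J (∫ t in (0:ℝ)..1,
      ((4*Real.pi*h1*a1*t : ℝ) : ℂ) * deriv F (u a1 t) * ((w α β t : ℝ) : ℂ)) a1 := by
    refine (intervalIntegral.hasDerivAt_integral_of_dominated_loc_of_deriv_le
      (F := fun x t => F (u x t) * ((w α β t : ℝ):ℂ))
      (F' := fun x t => ((4*Real.pi*h1*x*t : ℝ):ℂ) * deriv F (u x t) * ((w α β t : ℝ):ℂ))
      (bound := fun t => M * (6*Real.pi*h1*a1) * (t^(α+1) * (1-t)^β))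
      (ball_mem_nhds a1 (by linarith : (0:ℝ) < a1/2)) ?_ ?_ ?_ ?_ ?_ ?_).2
    · filter_upwards [ball_mem_nhds a1 (by linarith : (0:ℝ) < a1/2)] with x hx
      rw [hIoc]
      apply ContinuousOn.aestronglyMeasurable _ measurableSet_Ioc
      apply ContinuousOn.mul _ hwcont
      apply hFc.comp (hucont x).continuousOn
      intro t ht
      exact hupos x hx t ⟨ht.1.le, ht.2⟩
    · exact auxIntMul hgc hα0 (by linarith)
    · rw [hIoc]
      apply ContinuousOn.aestronglyMeasurable _ measurableSet_Ioc
      apply ContinuousOn.mul _ hwcont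
      apply ContinuousOn.mul
      · exact (Complex.continuous_ofReal.comp
          (continuous_const.mul continuous_id)).continuousOn
      · apply hF'c.comp (hucont a1).continuousOn
        intro t ht
        exact hupos a1 ha1ball t ⟨ht.1.le, ht.2⟩
    · apply Filter.Eventually.of_forall
      intro t ht x hx
      rw [hIoc] at ht
      have htIcc : t ∈ Set.Icc (0:ℝ) 1 := ⟨ht.1.le, ht.2⟩
      obtain ⟨hx1, hx2⟩ := hball x hx
      have hxpos : 0 < x := by linarith
      have hwnn : 0 ≤ w α β t := by
        apply mul_nonneg (Real.rpow_nonneg ht.1.le _) (Real.rpow_nonneg (by linarith [ht.2]) _)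
      have hdF : ‖deriv F (u x t)‖ ≤ M := hM (u x t) (Set.mem_Icc.mpr (huIcc x hx t htIcc))
      have hpos4 : (0:ℝ) < 4*Real.pi*h1*x*t :=
        mul_pos (mul_pos (by positivity : (0:ℝ) < 4*Real.pi*h1) hxpos) ht.1
      rw [norm_mul, norm_mul, Complex.norm_real, Complex.norm_real,
        Real.norm_eq_abs, Real.norm_eq_abs,
        abs_of_pos hpos4, abs_of_nonneg hwnn]
      have hxle : 4*Real.pi*h1*x ≤ 6*Real.pi*h1*a1 := by
        nlinarith [mul_le_mul_of_nonneg_left hx2.le (by positivity : (0:ℝ) ≤ 4*Real.pi*h1)]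
      have hprod : 4*Real.pi*h1*x*t * (w α β t) ≤ 6*Real.pi*h1*a1 * (t^(α+1)*(1-t)^β) := by
        simp only [hwdef]
        rw [Real.rpow_add_one (ne_of_gt ht.1)]
        nlinarith [mul_le_mul_of_nonneg_right hxle
          (mul_nonneg (mul_nonneg ht.1.le (Real.rpow_nonneg ht.1.le α))
            (Real.rpow_nonneg (by linarith [ht.2] : (0:ℝ) ≤ 1 - t) β))]
      calc 4*Real.pi*h1*x*t * ‖deriv F (u x t)‖ * (w α β t)
          ≤ 4*Real.pi*h1*x*t * M * (w α β t) := by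
            apply mul_le_mul_of_nonneg_right _ hwnn
            exact mul_le_mul_of_nonneg_left hdF hpos4.le
        _ = M * (4*Real.pi*h1*x*t * (w α β t)) := by ring
        _ ≤ M * (6*Real.pi*h1*a1 * (t^(α+1)*(1-t)^β)) := mul_le_mul_of_nonneg_left hprod hM0
        _ = M * (6*Real.pi*h1*a1) * (t^(α+1)*(1-t)^β) := by ring
    · apply Continuous.intervalIntegrable
      exact continuous_const.mul ((auxCont hα1).mul
        ((auxCont hβpos).comp (continuous_const.sub continuous_id)))
    · apply Filter.Eventually.of_forall
      intro t ht x hx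
      rw [hIoc] at ht
      have htIcc : t ∈ Set.Icc (0:ℝ) 1 := ⟨ht.1.le, ht.2⟩
      have hu' : HasDerivAt (fun y => u y t) (4*Real.pi*h1*x*t) x := by
        simp only [hudef]
        have h := (((hasDerivAt_pow 2 x).const_mul (2*Real.pi*h1)).mul_const t).add_const
          (2*Real.pi*h2*a2^2*(1-t))
        refine h.congr_deriv ?_
        ring
      have hFda : HasDerivAt F (deriv F (u x t)) (u x t) := hFd _ (hupos x hx t htIcc)
      have hcomp : HasDerivAt (fun y => F (u y t))
          ((4*Real.pi*h1*x*t) • deriv F (u x t)) x := hFda.scomp x hu'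
      have h2' := hcomp.mul_const ((w α β t : ℝ):ℂ)
      refine h2'.congr_deriv ?_
      rw [Complex.real_smul]
  -- integration by parts
  have hβm1 : -1 < β := by linarith
  have hαp1 : -1 < α + 1 := by linarith
  have hF'cIcc : ContinuousOn (fun t => deriv F (u a1 t)) (Set.Icc 0 1) :=
    hF'c.comp (hucont a1).continuousOn (fun t ht => hupos a1 ha1ball t ht)
  have hφcont : Continuous (fun t : ℝ => w (α+1) β t) := by
    simp only [hwdef]
    exact (auxCont hα1).mul ((auxCont hβpos).comp (continuous_const.sub continuous_id))
  have i1 : IntervalIntegrable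
      (fun t => ((2*Real.pi*Δ : ℝ):ℂ) * deriv F (u a1 t) * ((w (α+1) β t : ℝ):ℂ))
      volume 0 1 := by
    simp only [hwdef]
    exact auxIntMul (continuousOn_const.mul hF'cIcc) hαp1 hβm1
  have i2eq : (fun t => F (u a1 t) * (((α+1) * w α β t - β * w (α+1) (β-1) t : ℝ):ℂ))
      = fun t => ((α+1:ℝ):ℂ) * (F (u a1 t) * ((w α β t : ℝ):ℂ))
          - ((β:ℝ):ℂ) * (F (u a1 t) * ((w (α+1) (β-1) t : ℝ):ℂ)) := by
    funext t
    push_cast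
    ring
  have i2a : IntervalIntegrable (fun t => F (u a1 t) * ((w α β t : ℝ):ℂ)) volume 0 1 := by
    simp only [hwdef]
    exact auxIntMul hgc hα0 hβm1
  have i2b : IntervalIntegrable (fun t => F (u a1 t) * ((w (α+1) (β-1) t : ℝ):ℂ)) volume 0 1 := by
    simp only [hwdef]
    exact auxIntMul hgc hαp1 hβ1
  have i2 : IntervalIntegrable
      (fun t => F (u a1 t) * (((α+1) * w α β t - β * w (α+1) (β-1) t : ℝ):ℂ)) volume 0 1 := by
    rw [i2eq]
    exact (i2a.const_mul _).sub (i2b.const_mul _)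
  have hH'd : ∀ t ∈ Set.Ioo (0:ℝ) 1, HasDerivAt
      (fun s => F (u a1 s) * ((w (α+1) β s : ℝ):ℂ))
      (((2*Real.pi*Δ : ℝ):ℂ) * deriv F (u a1 t) * ((w (α+1) β t : ℝ):ℂ)
        + F (u a1 t) * (((α+1) * w α β t - β * w (α+1) (β-1) t : ℝ):ℂ)) t := by
    intro t ht
    have hu'' : HasDerivAt (fun s => u a1 s) (2*Real.pi*Δ) t := by
      simp only [hudef]
      have hc1 : HasDerivAt (fun s : ℝ => 2*Real.pi*h1*a1^2*s) (2*Real.pi*h1*a1^2) t := by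
        simpa using (hasDerivAt_id t).const_mul (2*Real.pi*h1*a1^2)
      have hc2 : HasDerivAt (fun s : ℝ => 2*Real.pi*h2*a2^2*(1-s)) (2*Real.pi*h2*a2^2 * (-1)) t :=
        ((hasDerivAt_id t).const_sub 1).const_mul (2*Real.pi*h2*a2^2)
      have := hc1.add hc2
      refine this.congr_deriv ?_
      rw [hΔdef]
      ring
    have hgd : HasDerivAt (fun s => F (u a1 s)) ((2*Real.pi*Δ) • deriv F (u a1 t)) t :=
      (hFd _ (hupos a1 ha1ball t ⟨ht.1.le, ht.2.le⟩)).scomp t hu''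
    have hφd : HasDerivAt (fun s : ℝ => w (α+1) β s)
        ((α+1) * t^α * (1-t)^β + t^(α+1) * (β * (1-t)^(β-1) * (-1))) t := by
      simp only [hwdef]
      have p1 : HasDerivAt (fun s : ℝ => s^(α+1)) ((α+1)*t^α) t := by
        have := Real.hasDerivAt_rpow_const (x := t) (p := α+1) (Or.inl (ne_of_gt ht.1))
        rwa [show α + 1 - 1 = α by ring] at this
      have p2 : HasDerivAt (fun s : ℝ => (1-s)^β) (β*(1-t)^(β-1) * (-1)) t := by
        have inner : HasDerivAt (fun s : ℝ => 1 - s) (-1) t := (hasDerivAt_id t).const_sub 1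
        exact (Real.hasDerivAt_rpow_const (x := 1-t) (p := β)
          (Or.inl (by intro h; linarith [ht.2, h] : (1:ℝ)-t ≠ 0))).comp t inner
      exact p1.mul p2
    have hφdC : HasDerivAt (fun s => ((w (α+1) β s : ℝ):ℂ))
        (((α+1) * t^α * (1-t)^β + t^(α+1) * (β * (1-t)^(β-1) * (-1)) : ℝ):ℂ) t :=
      hφd.ofReal_comp
    have := hgd.mul hφdC
    refine this.congr_deriv ?_
    have hrw : ((α+1) * w α β t - β * w (α+1) (β-1) t : ℝ)
        = ((α+1) * t^α * (1-t)^β + t^(α+1) * (β * (1-t)^(β-1) * (-1)) : ℝ) := by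
      simp only [hwdef]
      ring
    rw [hrw, Complex.real_smul]
  have Hcont : ContinuousOn (fun s => F (u a1 s) * ((w (α+1) β s : ℝ):ℂ)) (Set.Icc 0 1) :=
    hgc.mul (Complex.continuous_ofReal.comp hφcont).continuousOn
  have hftc := intervalIntegral.integral_eq_sub_of_hasDeriv_right_of_le zero_le_one Hcont
    (fun t ht => (hH'd t ht).hasDerivWithinAt) (i1.add i2)
  have hH1 : F (u a1 1) * ((w (α+1) β 1 : ℝ):ℂ) = 0 := by
    simp only [hwdef]
    norm_num [Real.zero_rpow (ne_of_gt hβpos)]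
  have hH0 : F (u a1 0) * ((w (α+1) β 0 : ℝ):ℂ) = 0 := by
    simp only [hwdef]
    norm_num [Real.zero_rpow (ne_of_gt hα1)]
  rw [hH1, hH0, sub_zero, intervalIntegral.integral_add i1 i2] at hftc
  have hi2val : ∫ t in (0:ℝ)..1,
      F (u a1 t) * (((α+1) * w α β t - β * w (α+1) (β-1) t : ℝ):ℂ)
      = ((α+1:ℝ):ℂ) * J a1 - ((β:ℝ):ℂ) * J1 := by
    rw [i2eq, intervalIntegral.integral_sub (i2a.const_mul _) (i2b.const_mul _),
      intervalIntegral.integral_const_mul, intervalIntegral.integral_const_mul]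
  have hIBP : (∫ t in (0:ℝ)..1,
      ((2*Real.pi*Δ : ℝ):ℂ) * deriv F (u a1 t) * ((w (α+1) β t : ℝ):ℂ))
      = ((β:ℝ):ℂ) * J1 - ((α+1:ℝ):ℂ) * J a1 := by
    linear_combination hftc - hi2val
  -- rewrite the derivative of J using IBP
  have hΔC : (Δ:ℂ) ≠ 0 := Complex.ofReal_ne_zero.mpr hΔ.ne'
  have heq : (∫ t in (0:ℝ)..1, ((4*Real.pi*h1*a1*t : ℝ):ℂ) * deriv F (u a1 t) * ((w α β t : ℝ):ℂ))
      = ((2*h1*a1/Δ : ℝ):ℂ) * ∫ t in (0:ℝ)..1,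
          ((2*Real.pi*Δ : ℝ):ℂ) * deriv F (u a1 t) * ((w (α+1) β t : ℝ):ℂ) := by
    rw [← intervalIntegral.integral_const_mul]
    apply intervalIntegral.integral_congr
    intro t ht
    rw [Set.uIcc_of_le zero_le_one] at ht
    simp only [hwdef]
    rcases eq_or_lt_of_le ht.1 with h0 | h0
    · simp [← h0, Real.zero_rpow (ne_of_gt hα1)]
    · rw [Real.rpow_add_one (ne_of_gt h0)]
      push_cast
      field_simp
      ring
  have hJD : HasDerivAt J
      (((2*h1*a1/Δ : ℝ):ℂ) * (((β:ℝ):ℂ) * J1 - ((α+1:ℝ):ℂ) * J a1)) a1 := by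
    rw [← hIBP, ← heq]
    exact hJderiv
  -- derivative of the prefactor P
  have hpow : HasDerivAt (fun x : ℝ => (Real.sqrt h1 * x)^(2*k+1))
      ((2*(k:ℝ)+1) * (Real.sqrt h1*a1)^(2*k) * Real.sqrt h1) a1 := by
    have inner : HasDerivAt (fun x : ℝ => Real.sqrt h1 * x) (Real.sqrt h1) a1 := by
      simpa using (hasDerivAt_id a1).const_mul (Real.sqrt h1)
    have outer := hasDerivAt_pow (2*k+1) (Real.sqrt h1 * a1)
    have hcmp := outer.comp a1 inner
    refine hcmp.congr_deriv ?_
    simp only [Nat.add_sub_cancel]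
    push_cast
    ring
  have hinner2 : HasDerivAt (fun x : ℝ => h1*x^2 - h2*a2^2) (2*h1*a1) a1 := by
    have := ((hasDerivAt_pow 2 a1).const_mul h1).sub_const (h2*a2^2)
    refine this.congr_deriv ?_
    push_cast
    ring
  have hrpowd : HasDerivAt (fun x : ℝ => (h1*x^2 - h2*a2^2)^e)
      (e * Δ^(e-1) * (2*h1*a1)) a1 := by
    have houter := Real.hasDerivAt_rpow_const (x := Δ) (p := e) (Or.inl hΔ.ne')
    have := houter.comp a1 hinner2
    exact this
  have hPd : HasDerivAt P
      (((2*(k:ℝ)+1) * (Real.sqrt h1*a1)^(2*k) * Real.sqrt h1 *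
          (Real.sqrt h2*a2)^(2*d+1-2*k)) * Δ^e
        + ((Real.sqrt h1*a1)^(2*k+1) * (Real.sqrt h2*a2)^(2*d+1-2*k)) *
          (e * Δ^(e-1) * (2*h1*a1))) a1 := by
    simp only [hPdef]
    exact (hpow.mul_const ((Real.sqrt h2*a2)^(2*d+1-2*k))).mul hrpowd
  -- value of f (k+1)
  have e1 : (((m : ℝ) - (d : ℝ) - 1) / 2 + ((k+1 : ℕ) : ℝ)) = α + 1 := by
    rw [hαdef]; push_cast; ring
  have e2 : (((m : ℝ) + (d : ℝ) - 1) / 2 - ((k+1 : ℕ) : ℝ)) = β - 1 := by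
    rw [hβdef]; push_cast; ring
  have hfk1 : f (k+1) a1 a2 = (((Real.sqrt h1*a1)^(2*(k+1)+1) *
      (Real.sqrt h2*a2)^(2*d+1-2*(k+1)) * Δ^e : ℝ):ℂ) * J1 := by
    rw [hf (k+1) a1 a2 (by omega), e1, e2]
  -- assemble
  have hfx : (fun x : ℝ => f k x a2) = fun x => ((P x : ℝ):ℂ) * J x := funext hfk
  have htot := (hPd.ofReal_comp).mul hJD
  rw [hfx, show (fun x => ((P x : ℝ):ℂ) * J x) = (fun y => ((P y : ℝ):ℂ)) * J from rfl, htot.deriv, hfk a1, hfk1]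
  -- final algebra
  have hne : h1*a1^2 - h2*a2^2 ≠ 0 := by rw [← hΔdef]; exact hΔ.ne'
  have key1 : a1 * (((2*(k:ℝ)+1) * (Real.sqrt h1*a1)^(2*k) * Real.sqrt h1 *
          (Real.sqrt h2*a2)^(2*d+1-2*k)) * Δ^e
        + ((Real.sqrt h1*a1)^(2*k+1) * (Real.sqrt h2*a2)^(2*d+1-2*k)) *
          (e * Δ^(e-1) * (2*h1*a1)))
      - a1 * P a1 * (2*h1*a1/Δ) * (α+1)
      = -(2*(k:ℝ)+1) * (h2*a2^2/Δ) * P a1 := by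
    simp only [hPdef]
    rw [Real.rpow_sub_one hΔ.ne', pow_succ, hαdef, hedef, hΔdef]
    have hne2 : a1 ^ 2 * h1 - a2 ^ 2 * h2 ≠ 0 := by rw [mul_comm (a1 ^ 2), mul_comm (a2 ^ 2)]; exact hne
    field_simp
    ring
  have key2 : a1 * P a1 * (2*h1*a1/Δ) * β
      = ((m:ℝ)+(d:ℝ)-1-2*(k:ℝ)) * (h2*a2^2/Δ) *
        ((Real.sqrt h1*a1)^(2*(k+1)+1) * (Real.sqrt h2*a2)^(2*d+1-2*(k+1)) * Δ^e) := by
    simp only [hPdef]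
    rw [show (Real.sqrt h1*a1)^(2*(k+1)+1) = (Real.sqrt h1*a1)^(2*k+1) * (h1*a1^2) from by
        rw [show 2*(k+1)+1 = (2*k+1)+2 from by ring]
        rw [pow_add]
        congr 1
        rw [mul_pow, Real.sq_sqrt hh1.le],
      show (Real.sqrt h2*a2)^(2*d+1-2*k) = (Real.sqrt h2*a2)^(2*d+1-2*(k+1)) * (h2*a2^2) from by
        rw [show 2*d+1-2*k = (2*d+1-2*(k+1))+2 from by omega]
        rw [pow_add]
        congr 1
        rw [mul_pow, Real.sq_sqrt hh2.le],
      hβdef, hΔdef]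
    field_simp
  have K1 := congrArg (Complex.ofReal) key1
  have K2 := congrArg (Complex.ofReal) key2
  linear_combination (norm := (push_cast; ring1)) K1 * J a1 + K2 * J1
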